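/- Let A = (α_{jr}) and B = (β_{jr}) be k×n generator matrices in standard form of k-dimensional linear codes 𝒜 and 𝒝 of length n over F_q, and let σ_1,...,σ_n be permutations of F_q such that (σ_1(u_1),...,σ_n(u_n)) ∈ 𝒝 for every u = (u_1,...,u_n) ∈ 𝒜. Then for every a = (a_1,...,a_k) ∈ F_q^k and every r ∈ {k+1,...,n}, one has Σ_{j=1}^k σ_r(α_{jr} a_j) − (k−1) σ_r(0) = σ_r(Σ_{j=1}^k α_{jr} a_j). -/

import Mathlib

/-- A `k × n` matrix is in *standard form* if its first `k` columns form the identity. -/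
def StandardForm {F : Type*} [Zero F] [One F] {k n : ℕ} (hkn : k ≤ n)
    (G : Matrix (Fin k) (Fin n) F) : Prop :=
  ∀ i j : Fin k, G i (Fin.castLE hkn j) = if i = j then 1 else 0

/-- If `A = (α_{jr})` and `B = (β_{jr})` are generator matrices in standard form of linear
codes `𝒜` and `𝒝`, and permutations `σ 1, ..., σ n` of `F_q` carry every codeword of `𝒜`
coordinatewise into `𝒝`, then for every `a ∈ F_q^k` and every `r ∈ {k+1,...,n}`,
`∑ j, σ_r(α_{jr} a_j) - (k-1) σ_r(0) = σ_r (∑ j, α_{jr} a_j)`. -/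
theorem sum_sigma_sub_eq_sigma_sum
    {k n : ℕ} (hkn : k ≤ n)
    (F : Type*) [Field F] [Fintype F]
    (A B : Matrix (Fin k) (Fin n) F)
    (hA : StandardForm hkn A) (hB : StandardForm hkn B)
    (σ : Fin n → Equiv.Perm F)
    (hσ : ∀ u ∈ Set.range (fun a : Fin k → F => Matrix.vecMul a A),
      (fun i => σ i (u i)) ∈ Set.range (fun a : Fin k → F => Matrix.vecMul a B))
    (a : Fin k → F) (r : Fin n) (hr : k ≤ (r : ℕ)) :
    (∑ j : Fin k, σ r (A j r * a j)) - ((k : ℤ) - 1) • σ r 0 =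
      σ r (∑ j : Fin k, A j r * a j) := by
  -- key identity: for every `c : Fin k → F`,
  -- `σ r (∑ j, A j r * c j) = ∑ j, σ (castLE j) (c j) * B j r`
  have key : ∀ c : Fin k → F,
      σ r (∑ j : Fin k, A j r * c j)
        = ∑ j : Fin k, σ (Fin.castLE hkn j) (c j) * B j r := by
    intro c
    obtain ⟨b, hb⟩ := hσ (Matrix.vecMul c A) ⟨c, rfl⟩
    have hcoord : ∀ i : Fin n, σ i (Matrix.vecMul c A i) = Matrix.vecMul b B i := by
      intro i; exact (congrFun hb i).symm
    have hb' : ∀ j : Fin k, b j = σ (Fin.castLE hkn j) (c j) := by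
      intro j
      have h1 := hcoord (Fin.castLE hkn j)
      have hA' : Matrix.vecMul c A (Fin.castLE hkn j) = c j := by
        simp [Matrix.vecMul, dotProduct, hA _ j, mul_ite]
      have hB' : Matrix.vecMul b B (Fin.castLE hkn j) = b j := by
        simp [Matrix.vecMul, dotProduct, hB _ j, mul_ite]
      rw [hA', hB'] at h1
      exact h1.symm
    have h2 := hcoord r
    have hAr : Matrix.vecMul c A r = ∑ j : Fin k, A j r * c j := by
      simp [Matrix.vecMul, dotProduct, mul_comm]
    have hBr : Matrix.vecMul b B r = ∑ j : Fin k, σ (Fin.castLE hkn j) (c j) * B j r := by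
      simp only [Matrix.vecMul, dotProduct]
      exact Finset.sum_congr rfl fun j _ => by rw [hb' j]
    rw [hAr] at h2
    rw [h2, hBr]
  set τ : Fin k → F → F := fun j x => σ (Fin.castLE hkn j) x * B j r with hτ
  have key0 : σ r 0 = ∑ j : Fin k, τ j 0 := by
    have := key (fun _ => 0)
    simpa using this
  have keyj : ∀ j : Fin k, σ r (A j r * a j) = τ j (a j) + ∑ i ∈ Finset.univ \ {j}, τ i 0 := by
    intro j
    have h := key (fun i => if i = j then a j else 0)
    have hL : (∑ i : Fin k, A i r * (if i = j then a j else 0)) = A j r * a j := by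
      rw [Finset.sum_eq_single j] <;> simp +contextual
    rw [hL] at h
    rw [h, Finset.sum_eq_add_sum_sdiff_singleton_of_mem (Finset.mem_univ j)]
    congr 1
    · simp [hτ]
    · exact Finset.sum_congr rfl fun i hi => by
        simp only [Finset.mem_sdiff, Finset.mem_singleton] at hi
        simp [hτ, hi.2]
  have hsum : (∑ j : Fin k, σ r (A j r * a j))
      = (∑ j : Fin k, τ j (a j)) + ((k : ℤ) - 1) • σ r 0 := by
    calc (∑ j : Fin k, σ r (A j r * a j))
        = ∑ j : Fin k, (τ j (a j) + ∑ i ∈ Finset.univ \ {j}, τ i 0) :=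
          Finset.sum_congr rfl fun j _ => keyj j
      _ = (∑ j : Fin k, τ j (a j)) + ∑ j : Fin k, ∑ i ∈ Finset.univ \ {j}, τ i 0 :=
          Finset.sum_add_distrib
      _ = (∑ j : Fin k, τ j (a j)) + ((k : ℤ) - 1) • σ r 0 := by
          congr 1
          have : ∀ j : Fin k, (∑ i ∈ Finset.univ \ {j}, τ i 0)
              = (∑ i : Fin k, τ i 0) - τ j 0 := by
            intro j
            rw [Finset.sum_sdiff_eq_sub (Finset.subset_univ {j})]
            simp
          rw [Finset.sum_congr rfl fun j _ => this j, Finset.sum_sub_distrib, ← key0]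
          rw [Finset.sum_const, Finset.card_univ, Fintype.card_fin]
          push_cast [sub_smul]
          simp
  rw [hsum, key (fun j => a j)]
  ring_nf
  rfl
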